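/- arXiv:1601.01581 — 2 statements merged into one kernel-verified Lean document; each statement's English description precedes it below -/
import Mathlib

section
/- In the formal power series ring K[[t]], 1 + (α+β+t)·∑_{k≥1} G^{(α,β)}_{(k)}(x₁,…,x_n)·t^{k−1} = ∏_{j=1}^n (1+βx_j)·((1−αx_j) − x_j t)^{−1}, where (k) denotes the one-row partition with k boxes, each factor on the right is invertible in K[[t]] since its constant coefficient 1−αx_j is a nonzero element of K, and the infinite sum on the left is the power series whose coefficient of t^{k−1} is G^{(α,β)}_{(k)}(x₁,…,x_n). -/
/-- The canonical stable Grothendieck polynomial `G^{(α,β)}_λ(y₁,…,yₙ)`, defined by the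
bialternant formula
`G^{(α,β)}_λ = det[ yᵢ^{λⱼ+n-j} (1+βyᵢ)^{j-1} (1-αyᵢ)^{-λⱼ} ] / ∏_{i<j} (yᵢ - yⱼ)`.
Here `lam j` is the part `λ_{j+1}` (0-indexed `j`). -/
noncomputable def Gb {K : Type*} [Field K] (n : ℕ) (α β : K) (lam : Fin n → ℕ)
    (y : Fin n → K) : K :=
  (Matrix.of fun i j : Fin n =>
      y i ^ (lam j + (n - 1 - (j : ℕ))) * (1 + β * y i) ^ (j : ℕ) *
        ((1 - α * y i) ^ lam j)⁻¹).det /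
    ∏ i : Fin n, ∏ j ∈ Finset.Ioi i, (y i - y j)

open Matrix Finset

/-- reindexing a strict-upper-triangular double product by `Fin.rev`. -/
lemma prod_Ioi_rev {R : Type*} [CommMonoid R] {n : ℕ} (f : Fin n → Fin n → R) :
    (∏ i : Fin n, ∏ j ∈ Finset.Ioi i, f (Fin.rev j) (Fin.rev i))
      = ∏ i : Fin n, ∏ j ∈ Finset.Ioi i, f i j := by
  rw [Finset.prod_sigma', Finset.prod_sigma']
  refine Finset.prod_nbij' (fun p => ⟨Fin.rev p.2, Fin.rev p.1⟩)
    (fun p => ⟨Fin.rev p.2, Fin.rev p.1⟩) ?_ ?_ ?_ ?_ ?_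
  · rintro ⟨i, j⟩ h
    simp only [Finset.mem_sigma, Finset.mem_univ, Finset.mem_Ioi, true_and] at h ⊢
    exact Fin.rev_lt_rev.mpr h
  · rintro ⟨i, j⟩ h
    simp only [Finset.mem_sigma, Finset.mem_univ, Finset.mem_Ioi, true_and] at h ⊢
    exact Fin.rev_lt_rev.mpr h
  · rintro ⟨i, j⟩ _; simp
  · rintro ⟨i, j⟩ _; simp
  · rintro ⟨i, j⟩ _; rfl

/-- reversed Vandermonde determinant. -/
lemma det_revVandermonde {R : Type*} [CommRing R] {m : ℕ} (a : Fin (m+1) → R) :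
    (Matrix.of fun i j : Fin (m+1) => a i ^ (m - (j : ℕ))).det
      = ∏ i : Fin (m+1), ∏ j ∈ Finset.Ioi i, (a i - a j) := by
  have h : (Matrix.of fun i j : Fin (m+1) => a i ^ (m - (j : ℕ)))
      = (Matrix.vandermonde (fun i => a i.rev)).submatrix Fin.revPerm Fin.revPerm := by
    ext i j
    simp only [Matrix.of_apply, Matrix.submatrix_apply, Matrix.vandermonde_apply, Fin.rev_rev,
      Fin.revPerm_apply, Fin.rev_rev]
    congr 1
    rw [Fin.val_rev]
    omega
  rw [h, Matrix.det_submatrix_equiv_self, Matrix.det_vandermonde]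
  rw [← prod_Ioi_rev (fun i j => a i - a j)]

lemma binom_sum {R : Type*} [CommRing R] {m : ℕ} (a β : R) (j : Fin (m+1)) :
    (∑ k : Fin (m+1), a ^ (m - (k : ℕ)) * (((j : ℕ).choose (k : ℕ) : R) * β ^ ((j : ℕ) - (k : ℕ))))
      = a ^ (m - (j : ℕ)) * (1 + β * a) ^ (j : ℕ) := by
  have hj : (j : ℕ) ≤ m := Nat.lt_succ_iff.mp j.isLt
  rw [Fin.sum_univ_eq_sum_range (fun k => a ^ (m - k) * (((j : ℕ).choose k : R) * β ^ ((j : ℕ) - k)))]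
  rw [← Finset.sum_subset (Finset.range_subset_range.mpr (by omega : (j : ℕ) + 1 ≤ m + 1))
    (fun k _ hk => by
      have : (j : ℕ) < k := by simp only [Finset.mem_range, not_lt] at hk ⊢; omega
      simp [Nat.choose_eq_zero_of_lt this])]
  rw [← Finset.sum_range_reflect]
  have hpow : (1 + β * a) ^ (j : ℕ) = (β * a + 1) ^ (j : ℕ) := by ring_nf
  rw [hpow, add_pow, Finset.mul_sum]
  refine Finset.sum_congr rfl fun k hk => ?_
  have hk' : k ≤ (j : ℕ) := Nat.lt_succ_iff.mp (Finset.mem_range.mp hk)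
  have h1 : (j : ℕ) + 1 - 1 - k = (j : ℕ) - k := by omega
  rw [h1, Nat.choose_symm hk']
  have h2 : (j : ℕ) - ((j : ℕ) - k) = k := by omega
  have h3 : m - ((j : ℕ) - k) = (m - (j : ℕ)) + k := by omega
  rw [h2, h3, pow_add, mul_pow, one_pow]
  ring

lemma det_binomVandermonde {R : Type*} [CommRing R] {m : ℕ} (a : Fin (m+1) → R) (β : R) :
    (Matrix.of fun i j : Fin (m+1) => a i ^ (m - (j : ℕ)) * (1 + β * a i) ^ (j : ℕ)).det
      = ∏ i : Fin (m+1), ∏ j ∈ Finset.Ioi i, (a i - a j) := by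
  have key : (Matrix.of fun i j : Fin (m+1) => a i ^ (m - (j : ℕ)) * (1 + β * a i) ^ (j : ℕ))
      = (Matrix.of fun i j : Fin (m+1) => a i ^ (m - (j : ℕ))) *
        (Matrix.of fun k j : Fin (m+1) => (((j : ℕ).choose (k : ℕ) : R) * β ^ ((j : ℕ) - (k : ℕ)))) := by
    ext i j
    rw [Matrix.mul_apply]
    simp only [Matrix.of_apply]
    exact (binom_sum (a i) β j).symm
  rw [key, Matrix.det_mul, det_revVandermonde]
  have htri : (Matrix.of fun k j : Fin (m+1) =>
      (((j : ℕ).choose (k : ℕ) : R) * β ^ ((j : ℕ) - (k : ℕ)))).BlockTriangular id := by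
    intro k j h
    have : (j : ℕ) < (k : ℕ) := h
    simp [Nat.choose_eq_zero_of_lt this]
  rw [Matrix.det_of_upperTriangular htri]
  simp

lemma lemA {R : Type*} [CommRing R] {m : ℕ} (ξ v : Fin (m+1) → R) (s : R) :
    s * (Matrix.of fun i j : Fin (m+1) =>
        if (j : ℕ) = 0 then ξ i ^ (m+1)
        else v i * (ξ i ^ (m - (j : ℕ)) * (v i + s * ξ i) ^ (j : ℕ))).det
      = ((∏ i, (v i + s * ξ i)) - ∏ i, v i) *
        (Matrix.of fun i j : Fin (m+1) =>
          ξ i ^ (m - (j : ℕ)) * (v i + s * ξ i) ^ (j : ℕ)).det := by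
  set b : Fin (m+1) → R := fun i => v i + s * ξ i with hb
  set P : Matrix (Fin (m+1)) (Fin (m+1)) R := Matrix.of fun i j =>
    if (j : ℕ) = 0 then ξ i ^ (m+1) else v i * (ξ i ^ (m - (j : ℕ)) * b i ^ (j : ℕ)) with hP
  set G : Matrix (Fin (m+1)) (Fin (m+1)) R := Matrix.of fun i j =>
    ξ i ^ (m - (j : ℕ)) * b i ^ (j : ℕ) with hG
  set colA : Fin (m+1) → R := fun i => ξ i ^ m * b i with hcolA
  set colB : Fin (m+1) → R := fun i => ξ i ^ m * v i with hcolB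
  have hsmul : (s • fun i => P i 0) = colA - colB := by
    funext i
    simp only [Pi.smul_apply, Pi.sub_apply, smul_eq_mul, hP, Matrix.of_apply, hcolA, hcolB,
      Fin.val_zero, if_pos rfl, hb, pow_succ, if_true]
    ring
  have step1 : s * P.det = ((P.updateCol 0 colA).det - (P.updateCol 0 colB).det) := by
    have : s * P.det = (P.updateCol 0 (s • fun i => P i 0)).det := by
      rw [Matrix.det_updateCol_smul, Matrix.updateCol_eq_self]
    rw [this, hsmul, sub_eq_add_neg, ← neg_one_smul R colB, Matrix.det_updateCol_add,
      Matrix.det_updateCol_smul, neg_one_mul, ← sub_eq_add_neg]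
  have hBdet : (P.updateCol 0 colB).det = (∏ i, v i) * G.det := by
    have : P.updateCol 0 colB = Matrix.of fun i j => v i * G i j := by
      ext i j
      by_cases hj : j = 0
      · subst hj
        simp only [Matrix.updateCol_self, hcolB, hG, Matrix.of_apply, Fin.val_zero,
          Nat.sub_zero, pow_zero, mul_one]
        ring
      · have hj' : (j : ℕ) ≠ 0 := fun h => hj (Fin.ext h)
        simp only [Matrix.updateCol_ne hj, hP, hG, Matrix.of_apply, if_neg hj']
    rw [this, Matrix.det_mul_column]
  have hAdet : (P.updateCol 0 colA).det = (∏ i, b i) * G.det := by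
    set A'' : Matrix (Fin (m+1)) (Fin (m+1)) R := Matrix.of fun i j =>
      ξ i ^ (m - (j : ℕ)) * b i ^ ((j : ℕ) + 1) with hA''
    have h1 : A''.det = (P.updateCol 0 colA).det := by
      refine Matrix.det_eq_of_forall_col_eq_smul_add_pred (fun _ => s) ?_ ?_
      · intro i
        simp [hA'', Matrix.updateCol_self, hcolA]
      · intro i j
        have hne : (j.succ : ℕ) ≠ 0 := by simp
        have hj : (j : ℕ) < m := j.isLt
        rw [Matrix.updateCol_ne (fun h => by simpa using congrArg Fin.val h)]
        have hne' : ¬((j : ℕ) + 1 = 0) := Nat.succ_ne_zero _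
        simp only [hA'', Matrix.of_apply, hP, Fin.val_succ, Fin.coe_castSucc, if_neg hne']
        have e1 : m - (j : ℕ) = (m - ((j : ℕ) + 1)) + 1 := by omega
        rw [e1, pow_succ, pow_succ]
        ring
    have h2 : A'' = Matrix.of fun i j => b i * G i j := by
      ext i j
      simp only [hA'', hG, Matrix.of_apply, pow_succ]
      ring
    rw [← h1, h2, Matrix.det_mul_column]
  rw [step1, hBdet, hAdet]
  ring

set_option maxHeartbeats 1000000 in
/-- in `K[[t]]`,
`1 + (α+β+t)·∑_{k≥1} G^{(α,β)}_{(k)}(x₁,…,xₙ) t^{k-1} = ∏_{j=1}^n (1+βxⱼ)·((1-αxⱼ) - xⱼt)⁻¹`,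
where `(k)` is the one-row partition with `k` boxes and the power series on the left is the
one whose coefficient of `t^{k-1}` is `G^{(α,β)}_{(k)}(x₁,…,xₙ)`.  Each factor on the right
is invertible in `K[[t]]` since its constant coefficient `1-αxⱼ` is nonzero. -/
theorem stmt4 {K : Type*} [Field K] (n : ℕ) (hn : 0 < n) (α β : K) (x : Fin n → K)
    (hx : Function.Injective x) (hα : ∀ i, 1 - α * x i ≠ 0) :
    (1 : PowerSeries K) + ((PowerSeries.C : K →+* PowerSeries K) (α + β) + PowerSeries.X) *
        PowerSeries.mk (fun m => Gb n α β (fun j => if (j : ℕ) = 0 then m + 1 else 0) x) =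
      ∏ j : Fin n, (PowerSeries.C : K →+* PowerSeries K) (1 + β * x j) *
        ((PowerSeries.C : K →+* PowerSeries K) (1 - α * x j) - (PowerSeries.C : K →+* PowerSeries K) (x j) * PowerSeries.X)⁻¹ := by
  obtain ⟨m, rfl⟩ : ∃ m, n = m + 1 := ⟨n - 1, (Nat.succ_pred_eq_of_pos hn).symm⟩
  classical
  set V : K := ∏ i : Fin (m+1), ∏ j ∈ Finset.Ioi i, (x i - x j) with hVdef
  have hV : V ≠ 0 := by
    rw [hVdef]
    refine Finset.prod_ne_zero_iff.mpr fun i _ => Finset.prod_ne_zero_iff.mpr fun j hj => ?_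
    refine sub_ne_zero.mpr fun h => ?_
    have hij := hx h
    rw [hij] at hj
    exact absurd (Finset.mem_Ioi.mp hj) (lt_irrefl _)
  clear_value V
  set sPS : PowerSeries K := (PowerSeries.C : K →+* PowerSeries K) (α + β) + PowerSeries.X with hsdef
  set v : Fin (m+1) → PowerSeries K := fun i =>
    (PowerSeries.C : K →+* PowerSeries K) (1 - α * x i) - (PowerSeries.C : K →+* PowerSeries K) (x i) * PowerSeries.X with hvdef
  set g : Fin (m+1) → ℕ → K := fun i k => x i ^ k * ((1 - α * x i) ^ (k+1))⁻¹ with hgdef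
  have hcv : ∀ i, (PowerSeries.constantCoeff : PowerSeries K →+* K) (v i) = 1 - α * x i := by
    intro i; rw [hvdef]; simp
  have hvg : ∀ i, v i * PowerSeries.mk (g i) = 1 := by
    intro i
    have hai := hα i
    ext k
    rw [hvdef]
    rw [sub_mul, mul_assoc, map_sub, PowerSeries.coeff_C_mul, PowerSeries.coeff_C_mul]
    cases k with
    | zero =>
      rw [PowerSeries.coeff_zero_X_mul]
      simp only [PowerSeries.coeff_mk, hgdef, PowerSeries.coeff_one, pow_zero, one_mul,
        mul_zero, sub_zero, if_pos rfl, pow_one, if_true, zero_add]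
      field_simp
    | succ k =>
      rw [PowerSeries.coeff_succ_X_mul]
      simp only [PowerSeries.coeff_mk, hgdef, PowerSeries.coeff_one, Nat.succ_ne_zero, if_false]
      have h2 : (1 - α * x i) ^ (k+1) ≠ 0 := pow_ne_zero _ hai
      have h3 : (1 - α * x i) ^ (k+1+1) ≠ 0 := pow_ne_zero _ hai
      field_simp
      ring
  have hb : ∀ i, (PowerSeries.C : K →+* PowerSeries K) (1 + β * x i) = v i + sPS * (PowerSeries.C : K →+* PowerSeries K) (x i) := by
    intro i
    have e : (1 : K) + β * x i = (1 - α * x i) + (α + β) * x i := by ring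
    rw [e, map_add, _root_.map_mul]
    simp only [hvdef, hsdef]
    ring
  set N : Matrix (Fin (m+1)) (Fin (m+1)) (PowerSeries K) := Matrix.of fun i j =>
    if (j : ℕ) = 0 then (PowerSeries.C : K →+* PowerSeries K) (x i ^ (m+1)) * PowerSeries.mk (g i)
    else (PowerSeries.C : K →+* PowerSeries K) (x i ^ (m - (j : ℕ)) * (1 + β * x i) ^ (j : ℕ)) with hNdef
  set P : Matrix (Fin (m+1)) (Fin (m+1)) (PowerSeries K) := Matrix.of fun i j =>
    if (j : ℕ) = 0 then (PowerSeries.C : K →+* PowerSeries K) (x i) ^ (m+1)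
    else v i * ((PowerSeries.C : K →+* PowerSeries K) (x i) ^ (m - (j : ℕ)) *
      (v i + sPS * (PowerSeries.C : K →+* PowerSeries K) (x i)) ^ (j : ℕ)) with hPdef
  -- claim 1
  have claim1 : (PowerSeries.C : K →+* PowerSeries K) V * PowerSeries.mk
      (fun k => Gb (m+1) α β (fun j => if (j : ℕ) = 0 then k + 1 else 0) x) = N.det := by
    ext k
    rw [PowerSeries.coeff_C_mul, PowerSeries.coeff_mk]
    simp only [Gb]
    rw [← hVdef, mul_comm, div_mul_cancel₀ _ hV]
    rw [Matrix.det_apply', Matrix.det_apply', _root_.map_sum]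
    refine Finset.sum_congr rfl fun σ _ => ?_
    have hsgn : (((Equiv.Perm.sign σ : ℤ) : PowerSeries K)) =
        (PowerSeries.C : K →+* PowerSeries K) ((Equiv.Perm.sign σ : ℤ) : K) := by
      rw [map_intCast]
    rw [hsgn, PowerSeries.coeff_C_mul]
    congr 1
    have hsplitN : (∏ j, N (σ j) j)
        = (PowerSeries.C : K →+* PowerSeries K) (x (σ 0) ^ (m+1) * ∏ j ∈ Finset.univ.erase (0 : Fin (m+1)),
            (x (σ j) ^ (m - (j : ℕ)) * (1 + β * x (σ j)) ^ (j : ℕ))) *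
          PowerSeries.mk (g (σ 0)) := by
      rw [← Finset.mul_prod_erase Finset.univ _ (Finset.mem_univ (0 : Fin (m+1)))]
      have h0 : N (σ 0) 0 = (PowerSeries.C : K →+* PowerSeries K) (x (σ 0) ^ (m+1)) * PowerSeries.mk (g (σ 0)) := by
        simp [hNdef]
      have hrest : (∏ j ∈ Finset.univ.erase (0 : Fin (m+1)), N (σ j) j)
          = (PowerSeries.C : K →+* PowerSeries K) (∏ j ∈ Finset.univ.erase (0 : Fin (m+1)),
              (x (σ j) ^ (m - (j : ℕ)) * (1 + β * x (σ j)) ^ (j : ℕ))) := by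
        rw [_root_.map_prod]
        refine Finset.prod_congr rfl fun j hj => ?_
        have hj0 : (j : ℕ) ≠ 0 := fun h => (Finset.mem_erase.mp hj).1 (Fin.ext h)
        simp [hNdef, hj0, (Finset.mem_erase.mp hj).1]
      rw [h0, hrest, _root_.map_mul]
      ring
    rw [hsplitN, PowerSeries.coeff_C_mul, PowerSeries.coeff_mk]
    rw [← Finset.mul_prod_erase Finset.univ _ (Finset.mem_univ (0 : Fin (m+1)))]
    have hrestM : (∏ j ∈ Finset.univ.erase (0 : Fin (m+1)),
        (Matrix.of fun i j : Fin (m+1) =>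
          x i ^ ((if (j : ℕ) = 0 then k + 1 else 0) + (m + 1 - 1 - (j : ℕ))) *
            (1 + β * x i) ^ (j : ℕ) *
            ((1 - α * x i) ^ (if (j : ℕ) = 0 then k + 1 else 0))⁻¹) (σ j) j)
        = ∏ j ∈ Finset.univ.erase (0 : Fin (m+1)),
            (x (σ j) ^ (m - (j : ℕ)) * (1 + β * x (σ j)) ^ (j : ℕ)) := by
      refine Finset.prod_congr rfl fun j hj => ?_
      have hj0 : (j : ℕ) ≠ 0 := fun h => (Finset.mem_erase.mp hj).1 (Fin.ext h)
      simp [hj0, (Finset.mem_erase.mp hj).1]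
    rw [hrestM]
    simp only [Matrix.of_apply, Fin.val_zero, if_pos rfl, if_true, pow_zero, mul_one, hgdef]
    rw [show (k + 1) + (m + 1 - 1 - 0) = (m + 1) + k by omega, pow_add]
    ring
  -- claim 2
  have claim2 : (∏ i, v i) * N.det = P.det := by
    rw [Matrix.det_apply', Matrix.det_apply', Finset.mul_sum]
    refine Finset.sum_congr rfl fun σ _ => ?_
    have hperm : (∏ i, v i) = ∏ j, v (σ j) := (Equiv.prod_comp σ v).symm
    rw [hperm, mul_comm (∏ j, v (σ j)) _, mul_assoc, ← Finset.prod_mul_distrib]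
    congr 1
    refine Finset.prod_congr rfl fun j _ => ?_
    by_cases hj : (j : ℕ) = 0
    · simp only [hNdef, hPdef, Matrix.of_apply, if_pos hj]
      rw [mul_assoc, mul_comm (PowerSeries.mk (g (σ j))) (v (σ j)), hvg (σ j), mul_one, map_pow]
    · simp only [hNdef, hPdef, Matrix.of_apply, if_neg hj, _root_.map_mul, map_pow]
      rw [hb (σ j)]
      ring
  -- claim 3 (lemA)
  have claim3 : sPS * P.det = ((∏ i, (v i + sPS * (PowerSeries.C : K →+* PowerSeries K) (x i))) - ∏ i, v i) *
      (Matrix.of fun i j : Fin (m+1) => (PowerSeries.C : K →+* PowerSeries K) (x i) ^ (m - (j : ℕ)) *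
        (v i + sPS * (PowerSeries.C : K →+* PowerSeries K) (x i)) ^ (j : ℕ)).det := by
    rw [hPdef]
    exact lemA (fun i => (PowerSeries.C : K →+* PowerSeries K) (x i)) v sPS
  -- claim 4
  have claim4 : (Matrix.of fun i j : Fin (m+1) => (PowerSeries.C : K →+* PowerSeries K) (x i) ^ (m - (j : ℕ)) *
      (v i + sPS * (PowerSeries.C : K →+* PowerSeries K) (x i)) ^ (j : ℕ)).det = (PowerSeries.C : K →+* PowerSeries K) V := by
    have h1 : (Matrix.of fun i j : Fin (m+1) => (PowerSeries.C : K →+* PowerSeries K) (x i) ^ (m - (j : ℕ)) *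
        (v i + sPS * (PowerSeries.C : K →+* PowerSeries K) (x i)) ^ (j : ℕ))
        = Matrix.of fun i j : Fin (m+1) =>
            (PowerSeries.C : K →+* PowerSeries K) (x i ^ (m - (j : ℕ)) * (1 + β * x i) ^ (j : ℕ)) := by
      refine Matrix.ext fun i j => ?_
      rw [Matrix.of_apply, Matrix.of_apply, ← hb i, _root_.map_mul, map_pow, map_pow]
    have h3 : ((PowerSeries.C : K →+* PowerSeries K)).mapMatrix
        (Matrix.of fun i j : Fin (m+1) => x i ^ (m - (j : ℕ)) * (1 + β * x i) ^ (j : ℕ))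
        = Matrix.of fun i j : Fin (m+1) =>
            (PowerSeries.C : K →+* PowerSeries K) (x i ^ (m - (j : ℕ)) * (1 + β * x i) ^ (j : ℕ)) := by
      refine Matrix.ext fun i j => ?_
      simp [RingHom.mapMatrix_apply]
    rw [h1, ← h3, ← RingHom.map_det, det_binomVandermonde, hVdef]
  -- assembly
  have hprodb : (∏ i, (v i + sPS * (PowerSeries.C : K →+* PowerSeries K) (x i)))
      = ∏ i, (PowerSeries.C : K →+* PowerSeries K) (1 + β * x i) :=
    (Finset.prod_congr rfl fun i _ => (hb i).symm)
  have hne : ((PowerSeries.C : K →+* PowerSeries K) V * ∏ i, v i) ≠ 0 := by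
    intro h
    have hh := congrArg ((PowerSeries.constantCoeff : PowerSeries K →+* K)) h
    rw [_root_.map_mul, _root_.map_prod, PowerSeries.constantCoeff_C, map_zero] at hh
    have : ∀ i ∈ Finset.univ, (PowerSeries.constantCoeff : PowerSeries K →+* K) (v i) = 1 - α * x i :=
      fun i _ => hcv i
    rw [Finset.prod_congr rfl this] at hh
    exact (mul_ne_zero hV (Finset.prod_ne_zero_iff.mpr fun i _ => hα i)) hh
  apply mul_right_cancel₀ hne
  have hR : (∏ i : Fin (m+1), (PowerSeries.C : K →+* PowerSeries K) (1 + β * x i) * (v i)⁻¹) *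
      ((PowerSeries.C : K →+* PowerSeries K) V * ∏ i, v i)
      = (PowerSeries.C : K →+* PowerSeries K) V * ∏ i, (PowerSeries.C : K →+* PowerSeries K) (1 + β * x i) := by
    have hstep : ∀ i : Fin (m+1),
        (PowerSeries.C : K →+* PowerSeries K) (1 + β * x i) * (v i)⁻¹ * v i = (PowerSeries.C : K →+* PowerSeries K) (1 + β * x i) := by
      intro i
      rw [mul_assoc, PowerSeries.inv_mul_cancel _ (by rw [hcv i]; exact hα i), mul_one]
    calc (∏ i : Fin (m+1), (PowerSeries.C : K →+* PowerSeries K) (1 + β * x i) * (v i)⁻¹) *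
          ((PowerSeries.C : K →+* PowerSeries K) V * ∏ i, v i)
        = (PowerSeries.C : K →+* PowerSeries K) V *
            ∏ i : Fin (m+1), ((PowerSeries.C : K →+* PowerSeries K) (1 + β * x i) * (v i)⁻¹ * v i) := by
          conv_rhs => rw [Finset.prod_mul_distrib]
          ring
      _ = (PowerSeries.C : K →+* PowerSeries K) V * ∏ i, (PowerSeries.C : K →+* PowerSeries K) (1 + β * x i) := by
          rw [Finset.prod_congr rfl fun i _ => hstep i]
  rw [hR]
  have hL : (1 + sPS * PowerSeries.mk
      (fun k => Gb (m+1) α β (fun j => if (j : ℕ) = 0 then k + 1 else 0) x)) *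
      ((PowerSeries.C : K →+* PowerSeries K) V * ∏ i, v i)
      = (PowerSeries.C : K →+* PowerSeries K) V * ∏ i, (PowerSeries.C : K →+* PowerSeries K) (1 + β * x i) := by
    have e1 : (1 + sPS * PowerSeries.mk
        (fun k => Gb (m+1) α β (fun j => if (j : ℕ) = 0 then k + 1 else 0) x)) *
        ((PowerSeries.C : K →+* PowerSeries K) V * ∏ i, v i)
        = (PowerSeries.C : K →+* PowerSeries K) V * ∏ i, v i +
          sPS * ((∏ i, v i) * ((PowerSeries.C : K →+* PowerSeries K) V * PowerSeries.mk
            (fun k => Gb (m+1) α β (fun j => if (j : ℕ) = 0 then k + 1 else 0) x))) := by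
      ring
    rw [e1, claim1, claim2, claim3, claim4, hprodb]
    ring
  exact hL
end

section
/- Jacobi–Trudi identity (h-version): let λ be a partition with 1 ≤ ℓ(λ) ≤ n (with λ_i := 0 for i > ℓ(λ)). Then in K: G^{(α,β)}_λ(x₁,…,x_n) = det[ h̃^{(i)}_{λ_i−i+j} ]_{1≤i,j≤n}, where for an integer p, h̃^{(i)}_p := ∑_{k=0}^{i−1} (α+β)^k C(i−1, k) · h_{p+k}(x₁/(1−αx₁), …, x_n/(1−αx_n)), h_m is the complete homogeneous symmetric polynomial in n arguments (h_0 = 1, h_m := 0 for m < 0), evaluated at the rational functions x_i/(1−αx_i) ∈ K, and C(·,·) denotes binomial coefficients. -/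
/-- The complete homogeneous symmetric polynomial `h_m(y₁,…,yₙ)`. -/
noncomputable def hps {K : Type*} [Field K] (n m : ℕ) (y : Fin n → K) : K :=
  ∑ c ∈ Finset.Nat.antidiagonalTuple n m, ∏ i, y i ^ c i

/-- `h` with an integer index: `h_p = 0` for `p < 0`. -/
noncomputable def hInt {K : Type*} [Field K] (n : ℕ) (y : Fin n → K) (p : ℤ) : K :=
  if p < 0 then 0 else hps n p.toNat y

section Aux

open Finset Matrix PowerSeries

set_option linter.unnecessarySeqFocus false

lemma hps_eq_coeff {K : Type*} [Field K] (n m : ℕ) (y : Fin n → K) :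
    hps n m y = PowerSeries.coeff m (∏ i, PowerSeries.mk fun k => y i ^ k) := by
  rw [PowerSeries.coeff_prod]
  unfold hps
  refine Finset.sum_nbij' (fun c => (Finsupp.equivFunOnFinite.symm c : Fin n →₀ ℕ))
    (fun l => (l : Fin n → ℕ)) ?_ ?_ ?_ ?_ ?_ <;>
    simp [Finset.Nat.mem_antidiagonalTuple, Finsupp.equivFunOnFinite] <;>
    (intros; first | rfl | assumption)

lemma hps_zero {K : Type*} [Field K] {n : ℕ} (y : Fin n → K) : hps n 0 y = 1 := by
  unfold hps
  simp [Finset.Nat.antidiagonalTuple_zero_right]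

lemma geom_inv {K : Type*} [Field K] (c : K) :
    ((1 : K⟦X⟧) - PowerSeries.C c * PowerSeries.X) * PowerSeries.mk (fun k => c ^ k) = 1 := by
  ext m
  rcases m with _ | m
  · simp
  · rw [sub_mul, one_mul, mul_assoc, map_sub, PowerSeries.coeff_C_mul,
      PowerSeries.coeff_succ_X_mul]
    simp [pow_succ, mul_comm]

/-- `Q_j(t) = ∏_{i ≠ j} (1 - z_i t)`. -/
noncomputable def Qp {K : Type*} [Field K] {n : ℕ} (z : Fin n → K) (j : Fin n) : Polynomial K :=
  ∏ i ∈ Finset.univ.erase j, (1 - Polynomial.C (z i) * Polynomial.X)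

lemma Qp_natDegree_lt {K : Type*} [Field K] {n : ℕ} (hn : 0 < n) (z : Fin n → K) (j : Fin n) :
    (Qp z j).natDegree < n := by
  have h := Polynomial.natDegree_prod_le (Finset.univ.erase j)
    (fun i => 1 - Polynomial.C (z i) * Polynomial.X)
  have h2 : ∀ i ∈ Finset.univ.erase j,
      (1 - Polynomial.C (z i) * Polynomial.X).natDegree ≤ 1 := by
    intro i _
    refine le_trans (Polynomial.natDegree_sub_le _ _) ?_
    have := Polynomial.natDegree_C_mul_le (z i) (Polynomial.X : Polynomial K)
    simp only [Polynomial.natDegree_one, Polynomial.natDegree_X] at *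
    omega
  calc (Qp z j).natDegree ≤ ∑ i ∈ Finset.univ.erase j,
        (1 - Polynomial.C (z i) * Polynomial.X).natDegree := by unfold Qp; exact h
    _ ≤ ∑ _i ∈ Finset.univ.erase j, 1 :=
        Finset.sum_le_sum (f := fun i => (1 - Polynomial.C (z i) * Polynomial.X).natDegree) h2
    _ = n - 1 := by simp [Finset.card_erase_of_mem]
    _ < n := by omega

lemma Qp_mul_H {K : Type*} [Field K] {n : ℕ} (z : Fin n → K) (j : Fin n) :
    ((Qp z j : Polynomial K) : K⟦X⟧) * (∏ i, PowerSeries.mk fun k => z i ^ k) =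
      PowerSeries.mk fun k => z j ^ k := by
  have hH : (∏ i, PowerSeries.mk fun k => z i ^ k) =
      (PowerSeries.mk fun k => z j ^ k) *
        ∏ i ∈ Finset.univ.erase j, PowerSeries.mk fun k => z i ^ k :=
    (Finset.mul_prod_erase _ _ (Finset.mem_univ j)).symm
  have hQ : ((Qp z j : Polynomial K) : K⟦X⟧) =
      ∏ i ∈ Finset.univ.erase j, ((1 : K⟦X⟧) - PowerSeries.C (z i) * PowerSeries.X) := by
    unfold Qp
    rw [← Polynomial.coeToPowerSeries.ringHom_apply, map_prod]
    refine Finset.prod_congr rfl fun i _ => ?_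
    simp [Polynomial.coeToPowerSeries.ringHom_apply, Polynomial.coe_sub,
      Polynomial.coe_mul, Polynomial.coe_C, Polynomial.coe_X]
  rw [hH, hQ, mul_comm (PowerSeries.mk fun k => z j ^ k), ← mul_assoc,
    ← Finset.prod_mul_distrib]
  simp [geom_inv]

lemma key_sum {K : Type*} [Field K] {n : ℕ} (hn : 0 < n) (z : Fin n → K) (j : Fin n) (p : ℕ) :
    ∑ l ∈ Finset.range n, (Qp z j).coeff l * hInt n z ((p : ℤ) - (l : ℤ)) = z j ^ p := by
  have hzp : z j ^ p = PowerSeries.coeff p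
      (((Qp z j : Polynomial K) : K⟦X⟧) * (∏ i, PowerSeries.mk fun k => z i ^ k)) := by
    rw [Qp_mul_H]; simp
  rw [hzp, PowerSeries.coeff_mul, Finset.Nat.sum_antidiagonal_eq_sum_range_succ
    (f := fun a b => (PowerSeries.coeff a _) * (PowerSeries.coeff b _))]
  have h1 : ∀ a ∈ Finset.range (p + 1),
      (PowerSeries.coeff a ((Qp z j : Polynomial K) : K⟦X⟧)) *
        (PowerSeries.coeff (p - a) (∏ i, PowerSeries.mk fun k => z i ^ k)) =
      (Qp z j).coeff a * hInt n z ((p : ℤ) - (a : ℤ)) := by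
    intro a ha
    rw [Finset.mem_range] at ha
    rw [Polynomial.coeff_coe, ← hps_eq_coeff]
    unfold hInt
    rw [if_neg (by omega)]
    congr 2
    omega
  rw [Finset.sum_congr rfl h1]
  have hsub1 : Finset.range (p+1) ⊆ Finset.range (n + p + 1) := by
    intro a; simp; omega
  have hsub2 : Finset.range n ⊆ Finset.range (n + p + 1) := by
    intro a; simp; omega
  rw [Finset.sum_subset hsub1, Finset.sum_subset hsub2]
  · intro a _ ha
    rw [Finset.mem_range, not_lt] at ha
    rw [Polynomial.coeff_eq_zero_of_natDegree_lt (lt_of_lt_of_le (Qp_natDegree_lt hn z j) ha),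
      zero_mul]
  · intro a _ ha
    rw [Finset.mem_range, not_lt] at ha
    unfold hInt
    rw [if_pos (by omega), mul_zero]

lemma prod_Ioi_swap {M : Type*} [CommMonoid M] {n : ℕ} (f : Fin n → Fin n → M) :
    ∏ i, ∏ j ∈ Finset.Ioi i, f i j = ∏ j, ∏ i ∈ Finset.Iio j, f i j := by
  rw [Finset.prod_sigma', Finset.prod_sigma']
  refine Finset.prod_nbij' (fun p => ⟨p.2, p.1⟩) (fun p => ⟨p.2, p.1⟩) ?_ ?_ ?_ ?_ ?_ <;> simp

lemma prod_pairs_rev {M : Type*} [CommMonoid M] {n : ℕ} (f : Fin n → Fin n → M) :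
    (∏ i, ∏ j ∈ Finset.Ioi i, f (Fin.rev j) (Fin.rev i)) = ∏ i, ∏ j ∈ Finset.Ioi i, f i j := by
  rw [Finset.prod_sigma', Finset.prod_sigma']
  refine Finset.prod_nbij' (fun p => ⟨Fin.rev p.2, Fin.rev p.1⟩)
    (fun p => ⟨Fin.rev p.2, Fin.rev p.1⟩) ?_ ?_ ?_ ?_ ?_ <;>
    simp [Fin.rev_lt_rev]

lemma det_z_pow {K : Type*} [Field K] {n : ℕ} (z : Fin n → K) :
    (Matrix.of fun i j : Fin n => z j ^ (n - 1 - (i : ℕ))).det =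
      ∏ i, ∏ j ∈ Finset.Ioi i, (z i - z j) := by
  rw [← Matrix.det_submatrix_equiv_self Fin.revPerm]
  have : (Matrix.of fun i j : Fin n => z j ^ (n - 1 - (i : ℕ))).submatrix Fin.revPerm Fin.revPerm
      = (Matrix.vandermonde (z ∘ Fin.rev))ᵀ := by
    ext i j
    simp only [Matrix.submatrix_apply, Matrix.of_apply, Matrix.transpose_apply,
      Matrix.vandermonde, Fin.revPerm, Function.Involutive.coe_toPerm, Function.comp]
    congr 1
    rw [Fin.val_rev]
    omega
  rw [this, Matrix.det_transpose, Matrix.det_vandermonde]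
  exact prod_pairs_rev (fun a b => z a - z b)

lemma Rmul {K : Type*} [Field K] {n : ℕ} (hn : 0 < n) (z : Fin n → K) (μ : Fin n → ℕ) (γ : K) :
    (Matrix.of fun i j : Fin n =>
        ∑ k ∈ Finset.range ((i : ℕ) + 1),
          γ ^ k * ((i : ℕ).choose k : K) *
            hInt n z ((μ i : ℤ) - ((i : ℕ) : ℤ) + ((j : ℕ) : ℤ) + (k : ℤ))) *
      (Matrix.of fun k j : Fin n => (Qp z j).coeff (n - 1 - (k : ℕ))) =
    Matrix.of fun i j : Fin n => z j ^ (μ i + (n - 1 - (i : ℕ))) * (1 + γ * z j) ^ (i : ℕ) := by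
  ext i j
  rw [Matrix.mul_apply]
  simp only [Matrix.of_apply]
  have step1 : ∑ k' : Fin n,
      (∑ m ∈ Finset.range ((i : ℕ) + 1),
        γ ^ m * ((i : ℕ).choose m : K) *
          hInt n z ((μ i : ℤ) - ((i : ℕ) : ℤ) + ((k' : ℕ) : ℤ) + (m : ℤ))) *
        (Qp z j).coeff (n - 1 - (k' : ℕ)) =
      ∑ m ∈ Finset.range ((i : ℕ) + 1), γ ^ m * ((i : ℕ).choose m : K) *
        ∑ k' : Fin n, (Qp z j).coeff (n - 1 - (k' : ℕ)) *
          hInt n z ((μ i : ℤ) - ((i : ℕ) : ℤ) + ((k' : ℕ) : ℤ) + (m : ℤ)) := by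
    simp_rw [Finset.sum_mul]
    rw [Finset.sum_comm]
    refine Finset.sum_congr rfl fun m _ => ?_
    rw [Finset.mul_sum]
    refine Finset.sum_congr rfl fun k' _ => ?_
    ring
  rw [step1]
  have inner : ∀ m : ℕ,
      (∑ k' : Fin n, (Qp z j).coeff (n - 1 - (k' : ℕ)) *
        hInt n z ((μ i : ℤ) - ((i : ℕ) : ℤ) + ((k' : ℕ) : ℤ) + (m : ℤ))) =
      z j ^ (μ i + (n - 1 - (i : ℕ)) + m) := by
    intro m
    rw [← key_sum hn z j (μ i + (n - 1 - (i : ℕ)) + m),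
      ← Fin.sum_univ_eq_sum_range (fun l =>
        (Qp z j).coeff l * hInt n z (((μ i + (n - 1 - (i : ℕ)) + m : ℕ) : ℤ) - (l : ℤ))) n,
      ← Equiv.sum_comp Fin.revPerm (fun l : Fin n =>
        (Qp z j).coeff (l : ℕ) *
          hInt n z (((μ i + (n - 1 - (i : ℕ)) + m : ℕ) : ℤ) - ((l : ℕ) : ℤ)))]
    refine Finset.sum_congr rfl fun k' _ => ?_
    have hrev : ((Fin.revPerm k' : Fin n) : ℕ) = n - 1 - (k' : ℕ) := by
      simp only [Fin.revPerm, Function.Involutive.coe_toPerm]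
      rw [Fin.val_rev]
      omega
    simp only [hrev]
    congr 1
    have hi : (i : ℕ) ≤ n - 1 := by omega
    have hk : (k' : ℕ) ≤ n - 1 := by omega
    push_cast [Nat.cast_sub hi, Nat.cast_sub hk]
    ring
  simp_rw [inner]
  have hb : ∀ m : ℕ, γ ^ m * ((i : ℕ).choose m : K) * z j ^ (μ i + (n - 1 - (i : ℕ)) + m) =
      z j ^ (μ i + (n - 1 - (i : ℕ))) *
        ((γ * z j) ^ m * 1 ^ ((i : ℕ) - m) * ((i : ℕ).choose m : K)) := by
    intro m
    rw [pow_add, mul_pow]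
    ring
  simp_rw [hb]
  rw [← Finset.mul_sum, ← add_pow]
  ring_nf

lemma det_B {K : Type*} [Field K] {n : ℕ} (hn : 0 < n) (z : Fin n → K) :
    (Matrix.of fun k j : Fin n => (Qp z j).coeff (n - 1 - (k : ℕ))).det =
      ∏ i, ∏ j ∈ Finset.Ioi i, (z i - z j) := by
  have h := Rmul hn z (fun _ => 0) 0
  have hR : (Matrix.of fun i j : Fin n =>
      ∑ k ∈ Finset.range ((i : ℕ) + 1),
        (0 : K) ^ k * ((i : ℕ).choose k : K) *
          hInt n z ((((fun _ => 0) i : ℕ) : ℤ) - ((i : ℕ) : ℤ) + ((j : ℕ) : ℤ) + (k : ℤ))) =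
      Matrix.of fun i j : Fin n => hInt n z (((j : ℕ) : ℤ) - ((i : ℕ) : ℤ)) := by
    ext i j
    simp only [Matrix.of_apply]
    rw [Finset.sum_eq_single_of_mem 0 (by simp)]
    · norm_num
      congr 1
      ring
    · intro k _ hk
      rw [zero_pow hk]
      ring
  have hdetR : (Matrix.of fun i j : Fin n =>
      hInt n z (((j : ℕ) : ℤ) - ((i : ℕ) : ℤ))).det = 1 := by
    rw [Matrix.det_of_upperTriangular]
    · rw [Finset.prod_congr rfl (fun i _ => ?_), Finset.prod_const_one]
      show hInt n z (((i : ℕ) : ℤ) - ((i : ℕ) : ℤ)) = 1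
      unfold hInt
      rw [if_neg (by omega)]
      simpa using hps_zero z
    · intro i j hij
      show hInt n z _ = 0
      unfold hInt
      rw [if_pos]
      have : (j : ℕ) < (i : ℕ) := hij
      omega
  have hdet := congrArg Matrix.det h
  rw [Matrix.det_mul, hR, hdetR, one_mul] at hdet
  rw [hdet]
  have hsimp : (Matrix.of fun i j : Fin n =>
      z j ^ ((fun _ => 0) i + (n - 1 - (i : ℕ))) * (1 + 0 * z j) ^ (i : ℕ)) =
      Matrix.of fun i j : Fin n => z j ^ (n - 1 - (i : ℕ)) := by
    ext i j
    simp
  rw [hsimp, det_z_pow]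

lemma entry_eq {K : Type*} [Field K] (α β : K) (n : ℕ) (xi : K) (hd : 1 - α * xi ≠ 0)
    (a j lamj : ℕ) (haj : a + j = lamj + (n - 1)) :
    xi ^ a * (1 + β * xi) ^ j * (((1 - α * xi) ^ lamj)⁻¹) =
      (1 - α * xi) ^ (n - 1) *
        ((xi / (1 - α * xi)) ^ a * (1 + (α + β) * (xi / (1 - α * xi))) ^ j) := by
  have h1 : 1 + (α + β) * (xi / (1 - α * xi)) = (1 + β * xi) / (1 - α * xi) := by
    field_simp
    ring
  rw [h1, div_pow, div_pow]
  have hp : (1 - α * xi) ^ (n - 1) = (1 - α * xi) ^ a * (1 - α * xi) ^ j / (1 - α * xi) ^ lamj := by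
    rw [← pow_add, haj, pow_add]; field_simp
  rw [hp]
  field_simp
  have hd' : 1 - xi * α ≠ 0 := by rwa [mul_comm]
  rw [div_eq_div_iff (pow_ne_zero _ hd')
    (mul_ne_zero (mul_ne_zero (pow_ne_zero _ hd') (pow_ne_zero _ hd')) (pow_ne_zero _ hd'))]
  ring

end Aux

open Finset Matrix in
/-- Jacobi–Trudi, h-version: for a partition `λ` with `1 ≤ ℓ(λ) ≤ n`,
`G^{(α,β)}_λ(x₁,…,xₙ) = det[ h̃^{(i)}_{λᵢ-i+j} ]_{1≤i,j≤n}`, where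
`h̃^{(i)}_p = ∑_{k=0}^{i-1} (α+β)^k C(i-1,k) h_{p+k}(x₁/(1-αx₁),…,xₙ/(1-αxₙ))`
and `h_m := 0` for `m < 0`. -/
theorem stmt13 {K : Type*} [Field K] (n : ℕ) (hn : 0 < n) (α β : K) (x : Fin n → K)
    (hx : Function.Injective x) (hα : ∀ i, 1 - α * x i ≠ 0)
    (lam : Fin n → ℕ) (hlam : Antitone lam) (hpos : 0 < lam ⟨0, hn⟩) :
    Gb n α β lam x =
      (Matrix.of fun i j : Fin n =>
        ∑ k ∈ Finset.range ((i : ℕ) + 1),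
          (α + β) ^ k * ((i : ℕ).choose k : K) *
            hInt n (fun r => x r / (1 - α * x r))
              ((lam i : ℤ) - ((i : ℕ) : ℤ) + ((j : ℕ) : ℤ) + (k : ℤ))).det := by
  set z : Fin n → K := fun r => x r / (1 - α * x r) with hz
  set γ : K := α + β with hγ
  have hxz : ∀ i j, x i - x j = (1 - α * x i) * (1 - α * x j) * (z i - z j) := by
    intro i j
    have e : z i - z j = (x i - x j) / ((1 - α * x i) * (1 - α * x j)) := by
      rw [hz]
      simp only
      rw [div_sub_div _ _ (hα i) (hα j)]
      congr 1
      ring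
    rw [e, mul_comm ((1 - α * x i) * (1 - α * x j)),
      div_mul_cancel₀ _ (mul_ne_zero (hα i) (hα j))]
  have hzinj : Function.Injective z := by
    intro i j hij
    apply hx
    have h0 : x i - x j = 0 := by
      rw [hxz i j, sub_eq_zero_of_eq hij, mul_zero]
    exact sub_eq_zero.mp h0
  have hVz_ne : (∏ i, ∏ j ∈ Finset.Ioi i, (z i - z j)) ≠ 0 := by
    rw [Finset.prod_ne_zero_iff]
    intro i _
    rw [Finset.prod_ne_zero_iff]
    intro j hj
    rw [Finset.mem_Ioi] at hj
    exact sub_ne_zero.mpr fun he => absurd (hzinj he) (ne_of_lt hj)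
  have hP_ne : (∏ i, (1 - α * x i) ^ (n - 1)) ≠ 0 := by
    rw [Finset.prod_ne_zero_iff]
    exact fun i _ => pow_ne_zero _ (hα i)
  -- Vandermonde change of variables
  have hVx : (∏ i, ∏ j ∈ Finset.Ioi i, (x i - x j)) =
      (∏ i, (1 - α * x i) ^ (n - 1)) * ∏ i, ∏ j ∈ Finset.Ioi i, (z i - z j) := by
    have h1 : (∏ i, ∏ j ∈ Finset.Ioi i, (x i - x j)) =
        (∏ i, ∏ j ∈ Finset.Ioi i, ((1 - α * x i) * (1 - α * x j))) *
          ∏ i, ∏ j ∈ Finset.Ioi i, (z i - z j) := by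
      rw [← Finset.prod_mul_distrib]
      refine Finset.prod_congr rfl fun i _ => ?_
      rw [← Finset.prod_mul_distrib]
      exact Finset.prod_congr rfl fun j _ => hxz i j
    rw [h1]
    congr 1
    have h2 : (∏ i, ∏ j ∈ Finset.Ioi i, ((1 - α * x i) * (1 - α * x j))) =
        (∏ i, ∏ _j ∈ Finset.Ioi i, (1 - α * x i)) *
          ∏ i, ∏ j ∈ Finset.Ioi i, (1 - α * x j) := by
      rw [← Finset.prod_mul_distrib]
      refine Finset.prod_congr rfl fun i _ => ?_
      rw [← Finset.prod_mul_distrib]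
    rw [h2, prod_Ioi_swap (fun _ j => 1 - α * x j)]
    simp only [Finset.prod_const, Fin.card_Ioi, Fin.card_Iio]
    rw [← Finset.prod_mul_distrib]
    refine Finset.prod_congr rfl fun i _ => ?_
    rw [← pow_add]
    congr 1
    omega
  -- determinant change of variables
  have hAx : (Matrix.of fun i j : Fin n =>
      x i ^ (lam j + (n - 1 - (j : ℕ))) * (1 + β * x i) ^ (j : ℕ) *
        ((1 - α * x i) ^ lam j)⁻¹).det =
      (∏ i, (1 - α * x i) ^ (n - 1)) *
        (Matrix.of fun i j : Fin n =>
          z i ^ (lam j + (n - 1 - (j : ℕ))) * (1 + γ * z i) ^ (j : ℕ)).det := by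
    have he : (Matrix.of fun i j : Fin n =>
        x i ^ (lam j + (n - 1 - (j : ℕ))) * (1 + β * x i) ^ (j : ℕ) *
          ((1 - α * x i) ^ lam j)⁻¹) =
        Matrix.of fun i j : Fin n => (1 - α * x i) ^ (n - 1) *
          (z i ^ (lam j + (n - 1 - (j : ℕ))) * (1 + γ * z i) ^ (j : ℕ)) := by
      ext i j
      have hjlt : (j : ℕ) < n := j.isLt
      exact entry_eq α β n (x i) (hα i) _ _ _ (by omega)
    rw [he]
    exact Matrix.det_mul_column (fun i => (1 - α * x i) ^ (n - 1)) (Matrix.of fun i j : Fin n =>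
      z i ^ (lam j + (n - 1 - (j : ℕ))) * (1 + γ * z i) ^ (j : ℕ))
  -- Jacobi-Trudi in the z variables
  have hAz : (Matrix.of fun i j : Fin n =>
      z i ^ (lam j + (n - 1 - (j : ℕ))) * (1 + γ * z i) ^ (j : ℕ)).det =
      (Matrix.of fun i j : Fin n =>
        ∑ k ∈ Finset.range ((i : ℕ) + 1),
          γ ^ k * ((i : ℕ).choose k : K) *
            hInt n z ((lam i : ℤ) - ((i : ℕ) : ℤ) + ((j : ℕ) : ℤ) + (k : ℤ))).det *
        ∏ i, ∏ j ∈ Finset.Ioi i, (z i - z j) := by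
    rw [← Matrix.det_transpose]
    have ht : (Matrix.of fun i j : Fin n =>
        z i ^ (lam j + (n - 1 - (j : ℕ))) * (1 + γ * z i) ^ (j : ℕ))ᵀ =
        Matrix.of fun i j : Fin n =>
          z j ^ (lam i + (n - 1 - (i : ℕ))) * (1 + γ * z j) ^ (i : ℕ) := by
      ext i j
      simp
    rw [ht, ← Rmul hn z lam γ, Matrix.det_mul, det_B hn z]
  unfold Gb
  rw [hAx, hVx, hAz]
  rw [div_eq_iff (mul_ne_zero hP_ne hVz_ne)]
  ring
end
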